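/- Let G be an n-vertex graph and suppose each vertex is independently sampled into a set V' with probability q = (c ln n)/(√n − 1) for a constant c ≥ 4. Then with probability at least 1 − n^{−(c−3)}, every path P in the fixed canonical family 𝒫 of hop-limited shortest paths with at least √n hops contains at least one internal vertex belonging to V'. -/

import Mathlib

open scoped ENNReal

namespace Stmt4

variable {V : Type*}

/-- Endpoint of a walk starting at `u` with subsequent vertices given by the list. -/
def last : V → List V → V
  | u, [] => u
  | _, x :: xs => last x xs

/-- Weight of a walk starting at `u` with subsequent vertices given by the list. -/
noncomputable def cost (w : V → V → ℝ≥0∞) : V → List V → ℝ≥0∞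
  | _, [] => 0
  | u, x :: xs => w u x + cost w x xs

/-- `h`-hop-limited distance from `u` to `v` (non-edges have weight `⊤`). -/
noncomputable def hdist (w : V → V → ℝ≥0∞) (h : ℕ) (u v : V) : ℝ≥0∞ :=
  ⨅ p ∈ {p : List V | p.length ≤ h ∧ last u p = v}, cost w u p

/-- Shortest-path distance from `u` to `v`. -/
noncomputable def dist (w : V → V → ℝ≥0∞) (u v : V) : ℝ≥0∞ :=
  ⨅ h : ℕ, hdist w h u v

/-- `S` is a set of (at most) `k` closest reachable vertices to `v` (excluding `v`),
with ties broken arbitrarily: members of `S` are reachable and distinct from `v`,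
`|S| ≤ k`, every member is at least as close as every reachable non-member, and `S`
has exactly `k` elements unless it already contains all reachable vertices. -/
def IsKClosest [Fintype V] (w : V → V → ℝ≥0∞) (k : ℕ) (v : V) (S : Finset V) : Prop :=
  (∀ u ∈ S, u ≠ v ∧ dist w v u < ⊤) ∧ S.card ≤ k ∧
  (∀ y ∈ S, ∀ z, z ∉ S → z ≠ v → dist w v z < ⊤ → dist w v y ≤ dist w v z) ∧
  (∀ z, z ∉ S → z ≠ v → dist w v z < ⊤ → S.card = k)

/-- Weight function of the union `G ∪ G^(k)` of the graph with the `k`-shortcut hopset: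
hopset edges `(u,v)` (present when `u ∈ S v` or `v ∈ S u`) get weight `d_G(u,v)`. -/
noncomputable def unionW [Fintype V] [DecidableEq V] (w : V → V → ℝ≥0∞) (S : V → Finset V)
    (u v : V) : ℝ≥0∞ :=
  if u ∈ S v ∨ v ∈ S u then min (w u v) (dist w u v) else w u v


/-- `p` is the canonical `i`-hop-limited shortest `u`–`v` path: it has at most `i`
edges, ends at `v`, has minimum weight (equal to the `i`-limited distance), and among
such paths it has the fewest edges and is lexicographically smallest with respect to
the vertex identifiers `ids` (comparing vertex sequences from the tail `u`). -/
def CanonicalPath (w : V → V → ℝ≥0∞) (ids : V → ℕ) (i : ℕ) (u v : V) (p : List V) : Prop :=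
  p.length ≤ i ∧ last u p = v ∧ cost w u p = hdist w i u v ∧
  ∀ q : List V, q.length ≤ i → last u q = v → cost w u q = hdist w i u v →
    p.length ≤ q.length ∧
    (p.length = q.length → ¬ List.Lex (· < ·) ((u :: q).map ids) ((u :: p).map ids))

open MeasureTheory

lemma pi_all_false' {V : Type*} [Fintype V] [DecidableEq V] (q : NNReal) (h : q ≤ 1) (T : Finset V) :
    Measure.pi (fun _ : V => (PMF.bernoulli q h).toMeasure)
      {ω : V → Bool | ∀ x ∈ T, ω x = false} = (1 - q) ^ T.card := by
  have hset : {ω : V → Bool | ∀ x ∈ T, ω x = false} =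
      Set.univ.pi (fun x => if x ∈ T then ({false} : Set Bool) else Set.univ) := by
    ext ω
    simp only [Set.mem_setOf_eq, Set.mem_pi, Set.mem_univ, forall_true_left]
    constructor
    · intro hω x
      by_cases hx : x ∈ T <;> simp [hx, hω x]
    · intro hω x hx
      have := hω x
      simpa [hx] using this
  rw [hset, Measure.pi_pi]
  have hν : (PMF.bernoulli q h).toMeasure {false} = 1 - q := by
    rw [PMF.toMeasure_apply_singleton _ _ (measurableSet_singleton _)]; simp [PMF.bernoulli, ENNReal.coe_sub]
  calc (∏ x : V, (PMF.bernoulli q h).toMeasure (if x ∈ T then ({false} : Set Bool) else Set.univ))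
      = ∏ x : V, (if x ∈ T then (1 - (q : ℝ≥0∞)) else 1) := by
        refine Finset.prod_congr rfl fun x _ => ?_
        by_cases hx : x ∈ T <;> simp [hx, hν, PMF.bernoulli, PMF.ofFintype_apply, ENNReal.coe_sub, add_tsub_cancel_of_le (ENNReal.coe_le_one_iff.mpr h)]
    _ = ∏ x ∈ T, (1 - (q : ℝ≥0∞)) := by
        rw [Finset.prod_ite_mem, Finset.univ_inter]
    _ = (1 - q) ^ T.card := Finset.prod_const _

lemma key_bound' (n : ℕ) (hn2 : 2 ≤ n) (c : ℝ) (hc : 4 ≤ c)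
    (hr1 : c * Real.log n / (Real.sqrt n - 1) ≤ 1) (m : ℕ)
    (hm : Real.sqrt n - 1 ≤ m) :
    (1 - c * Real.log n / (Real.sqrt n - 1)) ^ m ≤ (n:ℝ) ^ (-c) := by
  set r := c * Real.log n / (Real.sqrt n - 1) with hrdef
  have hn1 : (1:ℝ) < Real.sqrt n := by
    have h1 : (1:ℝ) < (n:ℝ) := by exact_mod_cast lt_of_lt_of_le one_lt_two (by exact_mod_cast hn2)
    nlinarith [Real.sq_sqrt (by positivity : (0:ℝ) ≤ (n:ℝ)), Real.sqrt_nonneg (n:ℝ)]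
  have hlog : 0 ≤ Real.log n := Real.log_nonneg (by exact_mod_cast hn2.trans' one_le_two)
  have hrpos : 0 ≤ r := div_nonneg (mul_nonneg (by linarith) hlog) (by linarith)
  have hkey : c * Real.log n = r * (Real.sqrt n - 1) := by
    rw [hrdef, div_mul_cancel₀]; linarith
  calc (1-r)^m ≤ Real.exp (-r) ^ m := by
        apply pow_le_pow_left₀ (by linarith) (by linarith [Real.add_one_le_exp (-r)])
    _ = Real.exp ((m:ℝ) * (-r)) := (Real.exp_nat_mul _ m).symm
    _ ≤ Real.exp (-(c * Real.log n)) := by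
        apply Real.exp_le_exp.mpr
        nlinarith [hm, hrpos]
    _ = (n:ℝ) ^ (-c) := by
        rw [Real.rpow_def_of_pos (by positivity)]
        congr 1; ring


/-- With each vertex sampled independently with probability `q = c·ln n/(√n − 1)`,
with probability at least `1 − n^{−(c−3)}` every canonical hop-limited shortest path
with at least `√n` hops contains an internal sampled vertex. -/
theorem sampled_hits_long_paths [Fintype V]
    (w : V → V → ℝ≥0∞) (ids : V → ℕ) (hids : Function.Injective ids)
    (n : ℕ) (hn : n = Fintype.card V) (hn2 : 2 ≤ n)
    (c : ℝ) (hc : 4 ≤ c)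
    (hq1 : ENNReal.ofReal (c * Real.log n / (Real.sqrt n - 1)) ≤ 1)
    (Ps : Finset (List V)) (hcard : Ps.card ≤ n ^ 3)
    (hnodup : ∀ s ∈ Ps, s.Nodup)
    (hcanon : ∀ s ∈ Ps, ∃ (i : ℕ) (u v : V) (p : List V),
      s = u :: p ∧ CanonicalPath w ids i u v p) :
    1 - (n : ℝ≥0∞) ^ (-(c - 3)) ≤
      Measure.pi (fun _ : V => (PMF.bernoulli (Real.toNNReal (c * Real.log n / (Real.sqrt n - 1)))
        (ENNReal.coe_le_one_iff.mp hq1)).toMeasure)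
        {ω : V → Bool | ∀ s ∈ Ps, Real.sqrt n ≤ (s.length : ℝ) - 1 →
          ∃ x ∈ s.tail.dropLast, ω x = true} := by
  classical
  set r : ℝ := c * Real.log n / (Real.sqrt n - 1) with hrdef
  set μ : Measure (V → Bool) :=
    Measure.pi (fun _ : V => (PMF.bernoulli (Real.toNNReal r) (ENNReal.coe_le_one_iff.mp hq1)).toMeasure) with hμdef
  set G : Set (V → Bool) := {ω : V → Bool | ∀ s ∈ Ps, Real.sqrt n ≤ (s.length : ℝ) - 1 →
          ∃ x ∈ s.tail.dropLast, ω x = true} with hGdef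
  have hn1 : (1:ℝ) < Real.sqrt n := by
    have h1 : (1:ℝ) < (n:ℝ) := by exact_mod_cast lt_of_lt_of_le one_lt_two (by exact_mod_cast hn2)
    nlinarith [Real.sq_sqrt (by positivity : (0:ℝ) ≤ (n:ℝ)), Real.sqrt_nonneg (n:ℝ)]
  have hlog : 0 ≤ Real.log n := Real.log_nonneg (by exact_mod_cast hn2.trans' one_le_two)
  have hrpos : 0 ≤ r := div_nonneg (mul_nonneg (by linarith) hlog) (by linarith)
  have hr1 : r ≤ 1 := ENNReal.ofReal_le_one.mp hq1
  -- the bad events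
  set B : List V → Set (V → Bool) := fun s =>
    {ω : V → Bool | Real.sqrt n ≤ (s.length : ℝ) - 1 ∧
      ∀ x ∈ s.tail.dropLast.toFinset, ω x = false} with hBdef
  have hsub : Gᶜ ⊆ ⋃ s ∈ Ps, B s := by
    intro ω hω
    simp only [hGdef, Set.mem_compl_iff, Set.mem_setOf_eq, not_forall] at hω
    obtain ⟨s, hs, hlong, hno⟩ := hω
    refine Set.mem_biUnion hs ?_
    refine ⟨hlong, fun x hx => ?_⟩
    rw [List.mem_toFinset] at hx
    by_contra hfx
    exact hno ⟨x, hx, by simpa using hfx⟩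
  have hBs : ∀ s ∈ Ps, μ (B s) ≤ (n : ℝ≥0∞) ^ (-c) := by
    intro s hs
    by_cases hlong : Real.sqrt n ≤ (s.length : ℝ) - 1
    · have hBeq : B s = {ω : V → Bool | ∀ x ∈ s.tail.dropLast.toFinset, ω x = false} := by
        ext ω; simp [hBdef, hlong]
      rw [hBeq, hμdef, pi_all_false']
      have hnodups : s.tail.dropLast.Nodup :=
        ((hnodup s hs).tail).sublist (List.dropLast_sublist _)
      rw [List.toFinset_card_of_nodup hnodups]
      have hlen : s.tail.dropLast.length = s.length - 2 := by
        rw [List.length_dropLast, List.length_tail]; omega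
      have hlen2 : 2 ≤ s.length := by
        by_contra h
        push_neg at h
        interval_cases h' : s.length <;> simp_all <;> linarith
      have hm : Real.sqrt n - 1 ≤ (s.tail.dropLast.length : ℝ) := by
        rw [hlen]
        have : ((s.length - 2 : ℕ) : ℝ) = (s.length : ℝ) - 2 := by
          push_cast [hlen2]; ring
        rw [this]; linarith
      have h1q : (1 : ℝ≥0∞) - (Real.toNNReal r : ℝ≥0∞) = ENNReal.ofReal (1 - r) := by
        rw [show ((Real.toNNReal r : ℝ≥0∞)) = ENNReal.ofReal r from rfl, ENNReal.ofReal_sub 1 hrpos, ENNReal.ofReal_one]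
      rw [h1q, ← ENNReal.ofReal_pow (by linarith)]
      calc ENNReal.ofReal ((1 - r) ^ s.tail.dropLast.length)
          ≤ ENNReal.ofReal ((n : ℝ) ^ (-c)) :=
            ENNReal.ofReal_le_ofReal (key_bound' n hn2 c hc hr1 _ hm)
        _ = (n : ℝ≥0∞) ^ (-c) := by
            rw [← ENNReal.ofReal_rpow_of_pos (by positivity), ENNReal.ofReal_natCast]
    · have : B s = ∅ := by
        ext ω; simp [hBdef, hlong]
      simp [this]
  have hbad : μ Gᶜ ≤ (n : ℝ≥0∞) ^ (-(c - 3)) := by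
    calc μ Gᶜ ≤ μ (⋃ s ∈ Ps, B s) := measure_mono hsub
      _ ≤ ∑ s ∈ Ps, μ (B s) := measure_biUnion_finset_le _ _
      _ ≤ ∑ _s ∈ Ps, (n : ℝ≥0∞) ^ (-c) := Finset.sum_le_sum hBs
      _ = (Ps.card : ℝ≥0∞) * (n : ℝ≥0∞) ^ (-c) := by
          rw [Finset.sum_const, nsmul_eq_mul]
      _ ≤ ((n ^ 3 : ℕ) : ℝ≥0∞) * (n : ℝ≥0∞) ^ (-c) := by
          gcongr
          all_goals exact_mod_cast hcard
      _ = (n : ℝ≥0∞) ^ (-(c - 3)) := by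
          have hne : (n : ℝ≥0∞) ≠ 0 := Nat.cast_ne_zero.mpr (by omega)
          have hnt : (n : ℝ≥0∞) ≠ ⊤ := ENNReal.natCast_ne_top n
          push_cast
          rw [← ENNReal.rpow_natCast (n : ℝ≥0∞) 3, ← ENNReal.rpow_add _ _ hne hnt]
          congr 1; push_cast; ring
  have hprob : IsProbabilityMeasure μ := by rw [hμdef]; infer_instance
  have h1 : (1 : ℝ≥0∞) ≤ μ G + μ Gᶜ := by
    rw [← measure_univ (μ := μ), ← Set.union_compl_self G]
    exact measure_union_le _ _
  calc (1 : ℝ≥0∞) - (n : ℝ≥0∞) ^ (-(c - 3)) ≤ 1 - μ Gᶜ := tsub_le_tsub_left hbad 1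
    _ ≤ μ G := tsub_le_iff_right.mpr h1


end Stmt4
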